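/- If S is the 2×2 matrix with entries S₁₁=0, S₁₂=S₂₁=0, S₂₂=1, then for any ρ > 0 the off-diagonal graphical lasso objective G̃(Θ) = log det Θ − tr(SΘ) − 2ρ|Θ₁₂| is unbounded above over 2×2 positive definite matrices Θ. -/

import Mathlib

open Matrix

theorem odglasso_unbounded_example (ρ : ℝ) (hρ : 0 < ρ) :
    ∀ M : ℝ, ∃ Θ : Matrix (Fin 2) (Fin 2) ℝ, Θ.PosDef ∧
      M < Real.log Θ.det - ((!![0, 0; 0, 1] : Matrix (Fin 2) (Fin 2) ℝ) * Θ).trace -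
        2 * ρ * |Θ 0 1| := by
  intro M
  set t : ℝ := Real.exp (M + 2) with ht
  have htpos : 0 < t := Real.exp_pos _
  refine ⟨!![t, 0; 0, 1], ?_, ?_⟩
  · refine Matrix.PosDef.of_dotProduct_mulVec_pos ?_ ?_
    · ext i j
      fin_cases i <;> fin_cases j <;> simp [Matrix.conjTranspose, Matrix.vecHead, Matrix.vecTail]
    · intro x hx
      have h : x ⬝ᵥ (!![t, 0; 0, 1] *ᵥ x) = t * (x 0)^2 + (x 1)^2 := by
        simp [Matrix.mulVec, dotProduct, Fin.sum_univ_two]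
        ring
      rw [show (star x : Fin 2 → ℝ) = x from rfl, h]
      rcases (show x 0 ≠ 0 ∨ x 1 ≠ 0 by
        by_contra hc
        push_neg at hc
        exact hx (funext fun i => by fin_cases i <;> simp [hc.1, hc.2])) with h0 | h1
      · have := mul_pos htpos (pow_pos (abs_pos.mpr h0) 2)
        nlinarith [sq_nonneg (x 1), sq_abs (x 0)]
      · nlinarith [sq_nonneg (x 0), pow_pos (abs_pos.mpr h1) 2, sq_abs (x 1), mul_nonneg htpos.le (sq_nonneg (x 0))]
  · have hdet : (!![t, 0; 0, 1] : Matrix (Fin 2) (Fin 2) ℝ).det = t := by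
      simp [Matrix.det_fin_two]
    have htr : ((!![0, 0; 0, 1] : Matrix (Fin 2) (Fin 2) ℝ) * !![t, 0; 0, 1]).trace = 1 := by
      simp [Matrix.trace, Matrix.mul_apply, Fin.sum_univ_two]
    rw [hdet, htr]
    norm_num
    rw [ht, Real.log_exp]
    linarith
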